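/- Let N be a finite set with |N| ≥ 2f+1, A ⊆ N with |A| ≤ f, R = N \ A, and values x_j ∈ ℝ. After removing the f indices with largest values (set U) and the f with smallest values (set J), retaining M = N \ (U ∪ J): if all j ∈ R ∩ S satisfy x_j < ε for some subset S with |N ∩ S| ≥ 2f+1, then min_{j∈M} x_j < ε. -/
import Mathlib


open Finset

/-- If at least `2f+1` indices of `N` are sources and every regular source value is below `ε`,
then after trimming the `f` largest and `f` smallest values, some retained value is below `ε`. -/
theorem stmt12 {ι : Type*} [DecidableEq ι] (N : Finset ι) (f : ℕ)
    (hN : 2 * f + 1 ≤ N.card)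
    (A : Finset ι) (hA : A ⊆ N) (hAcard : A.card ≤ f)
    (x : ι → ℝ)
    (U J : Finset ι) (hU : U ⊆ N) (hJ : J ⊆ N)
    (hUcard : U.card = f) (hJcard : J.card = f) (hUJ : Disjoint U J)
    (hUtop : ∀ u ∈ U, ∀ j ∈ N \ U, x j ≤ x u)
    (hJbot : ∀ u ∈ J, ∀ j ∈ N \ J, x u ≤ x j)
    (S : Finset ι) (hS : 2 * f + 1 ≤ (N ∩ S).card)
    (ε : ℝ) (hx : ∀ j ∈ (N ∩ S) \ A, x j < ε) :
    ∃ j ∈ N \ (U ∪ J), x j < ε := by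
  set T := (N ∩ S) \ A with hT
  have hTcard : f + 1 ≤ T.card := by
    have h1 : (N ∩ S).card - A.card ≤ T.card := Finset.le_card_sdiff A (N ∩ S)
    omega
  -- retained set is nonempty
  have hMne : (N \ (U ∪ J)).Nonempty := by
    rw [← Finset.card_pos]
    have h2 : (U ∪ J).card ≤ 2 * f := by
      have := Finset.card_union_le U J
      omega
    have h3 : N.card - (U ∪ J).card ≤ (N \ (U ∪ J)).card :=
      Finset.le_card_sdiff (U ∪ J) N
    omega
  -- some element of T avoids J
  have hTJ : ¬ T ⊆ J := by
    intro h
    have := Finset.card_le_card h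
    omega
  obtain ⟨t, htT, htJ⟩ := Finset.not_subset.mp hTJ
  have htx : x t < ε := hx t htT
  have htN : t ∈ N := (Finset.mem_inter.mp (Finset.mem_sdiff.mp htT).1).1
  by_cases htU : t ∈ U
  · obtain ⟨m, hm⟩ := hMne
    refine ⟨m, hm, ?_⟩
    have hmNU : m ∈ N \ U := by
      rw [Finset.mem_sdiff] at hm ⊢
      exact ⟨hm.1, fun h => hm.2 (Finset.mem_union_left _ h)⟩
    exact lt_of_le_of_lt (hUtop t htU m hmNU) htx
  · exact ⟨t, Finset.mem_sdiff.mpr ⟨htN, fun h => (Finset.mem_union.mp h).elim htU htJ⟩, htx⟩
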